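/- For all real x and all real y with |y| < π/2: |1 + exp(π·sinh(x + iy))| ≥ (1 + exp(π·sinh(x)·cos y))·cos((π/2)·sin y). -/

import Mathlib

open Complex Real

set_option maxHeartbeats 1000000

lemma cosh_ge_one_add_sq_half (t : ℝ) : 1 + t ^ 2 / 2 ≤ Real.cosh t := by
  have h1 : Real.cosh t = 2 * Real.sinh (t / 2) ^ 2 + 1 := by
    have := Real.cosh_two_mul (t / 2)
    rw [show 2 * (t / 2) = t by ring] at this
    rw [this, Real.cosh_sq]; ring
  have h2 : (t / 2) ^ 2 ≤ Real.sinh (t / 2) ^ 2 := by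
    have ha : |t / 2| ≤ Real.sinh |t / 2| := Real.self_le_sinh_iff.mpr (abs_nonneg _)
    have := Real.abs_sinh (t / 2)
    nlinarith [abs_nonneg (t / 2), _root_.sq_abs (t / 2), _root_.sq_abs (Real.sinh (t / 2))]
  nlinarith

-- key real inequality, nonneg case
lemma key_nonneg (x y : ℝ) (hx : 0 ≤ x) (hy0 : 0 ≤ y) (hy : y ≤ π / 2) :
    |Real.sin (π / 2 * Real.cosh x * Real.sin y)|
      ≤ Real.cosh (π / 2 * Real.sinh x * Real.cos y) * Real.sin (π / 2 * Real.sin y) := by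
  have hpi := Real.pi_pos
  set s := Real.sin y with hs
  set c := Real.cos y with hc
  have hs0 : 0 ≤ s := Real.sin_nonneg_of_nonneg_of_le_pi hy0 (by linarith)
  have hs1 : s ≤ 1 := Real.sin_le_one y
  have hc0 : 0 ≤ c := Real.cos_nonneg_of_mem_Icc ⟨by linarith, hy⟩
  have hc1 : c ≤ 1 := Real.cos_le_one y
  set θ := π / 2 * s with hθ
  have hθ0 : 0 ≤ θ := by positivity
  have hθ1 : θ ≤ π / 2 := by
    rw [hθ]; nlinarith
  set u := Real.cosh x - 1 with hu
  have hu0 : 0 ≤ u := by have := Real.one_le_cosh x; rw [hu]; linarith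
  have hB : π / 2 * Real.cosh x * s = θ + u * θ := by rw [hθ, hu]; ring
  set v := u * θ with hv
  have hv0 : 0 ≤ v := mul_nonneg hu0 hθ0
  -- step 1 : |sin(θ+v)| ≤ sin θ + cos θ * v
  have hsinθ0 : 0 ≤ Real.sin θ := Real.sin_nonneg_of_nonneg_of_le_pi hθ0 (by linarith)
  have hcosθ0 : 0 ≤ Real.cos θ := Real.cos_nonneg_of_mem_Icc ⟨by linarith, hθ1⟩
  have step1 : |Real.sin (θ + v)| ≤ Real.sin θ + Real.cos θ * v := by
    rw [Real.sin_add]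
    calc |Real.sin θ * Real.cos v + Real.cos θ * Real.sin v|
        ≤ |Real.sin θ * Real.cos v| + |Real.cos θ * Real.sin v| := abs_add_le _ _
      _ ≤ Real.sin θ + Real.cos θ * v := by
          rw [abs_mul, abs_mul, _root_.abs_of_nonneg hsinθ0, _root_.abs_of_nonneg hcosθ0]
          have h1 : |Real.cos v| ≤ 1 := Real.abs_cos_le_one v
          have h2 : |Real.sin v| ≤ v := by
            have := Real.abs_sin_le_abs (x := v)
            rwa [_root_.abs_of_nonneg hv0] at this
          nlinarith [abs_nonneg (Real.cos v), abs_nonneg (Real.sin v)]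
  -- step 2 : cos θ ≤ π/2 * c²
  have step2 : Real.cos θ ≤ π / 2 * c ^ 2 := by
    have h1 : Real.cos θ = Real.sin (π / 2 - θ) := (Real.sin_pi_div_two_sub θ).symm
    have h2 : Real.sin (π / 2 - θ) ≤ π / 2 - θ :=
      Real.sin_le (by linarith)
    have h3 : π / 2 - θ = π / 2 * (1 - s) := by rw [hθ]; ring
    have h4 : 1 - s ≤ c ^ 2 := by
      have := Real.sin_sq_add_cos_sq y
      nlinarith
    nlinarith
  -- step 3 : Jordan : θ ≤ π/2 * sin θ
  have step3 : θ ≤ π / 2 * Real.sin θ := by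
    have h := Real.mul_le_sin hθ0 hθ1
    have h2 := mul_le_mul_of_nonneg_left h (by positivity : (0:ℝ) ≤ π / 2)
    calc θ = π / 2 * (2 / π * θ) := by field_simp
      _ ≤ π / 2 * Real.sin θ := h2
  -- combine : |sin(θ+v)| ≤ (1 + A²/2) sin θ ≤ cosh A sin θ
  set A := π / 2 * Real.sinh x * c with hA
  have hsinh0 : 0 ≤ Real.sinh x := Real.sinh_nonneg_iff.mpr hx
  have hA2 : A ^ 2 = π ^ 2 / 4 * (u ^ 2 + 2 * u) * c ^ 2 := by
    rw [hA, hu]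
    linear_combination (-(π ^ 2 / 4 * c ^ 2)) * Real.cosh_sq x
  have main : Real.sin θ + Real.cos θ * v ≤ (1 + A ^ 2 / 2) * Real.sin θ := by
    have h1 : Real.cos θ * v ≤ π / 2 * c ^ 2 * (u * (π / 2 * Real.sin θ)) := by
      rw [hv]
      exact mul_le_mul step2 (mul_le_mul_of_nonneg_left step3 hu0)
        (mul_nonneg hu0 hθ0) (by positivity)
    have h2 : π / 2 * c ^ 2 * (u * (π / 2 * Real.sin θ)) ≤ A ^ 2 / 2 * Real.sin θ := by
      rw [hA2]
      have hnn : 0 ≤ π ^ 2 / 8 * u ^ 2 * c ^ 2 * Real.sin θ := by positivity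
      linarith [hnn]
    nlinarith [h1, h2]
  have hcosh : 1 + A ^ 2 / 2 ≤ Real.cosh A := cosh_ge_one_add_sq_half A
  rw [hB]
  calc |Real.sin (θ + v)| ≤ Real.sin θ + Real.cos θ * v := step1
    _ ≤ (1 + A ^ 2 / 2) * Real.sin θ := main
    _ ≤ Real.cosh A * Real.sin θ := mul_le_mul_of_nonneg_right hcosh hsinθ0

-- squared version for all x, |y| ≤ π/2
lemma key_sq (x y : ℝ) (hy : |y| ≤ π / 2) :
    Real.sin (π / 2 * Real.cosh x * Real.sin y) ^ 2
      ≤ Real.cosh (π / 2 * Real.sinh x * Real.cos y) ^ 2 * Real.sin (π / 2 * Real.sin y) ^ 2 := by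
  have h := key_nonneg |x| |y| (abs_nonneg x) (abs_nonneg y) hy
  have hcx : Real.cosh |x| = Real.cosh x := Real.cosh_abs x
  have hcy : Real.cos |y| = Real.cos y := by
    rcases abs_choice y with h' | h' <;> rw [h'] <;> simp [Real.cos_neg]
  have hsy : Real.sin |y| = |Real.sin y| := by
    rcases le_or_gt 0 y with h' | h'
    · rw [_root_.abs_of_nonneg h', _root_.abs_of_nonneg (Real.sin_nonneg_of_nonneg_of_le_pi h'
        (le_trans (le_of_abs_le hy) (by linarith [Real.pi_pos])))]
    · have hsn : Real.sin y ≤ 0 := Real.sin_nonpos_of_nonpos_of_neg_pi_le (le_of_lt h')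
        (by linarith [neg_abs_le y, Real.pi_pos])
      rw [abs_of_neg h', Real.sin_neg, _root_.abs_of_nonpos hsn]
  rw [hcx, hcy, hsy] at h
  have even : ∀ k t : ℝ, Real.sin (k * |t|) ^ 2 = Real.sin (k * t) ^ 2 := by
    intro k t
    rcases abs_choice t with h' | h'
    · rw [h']
    · rw [h', mul_neg, Real.sin_neg, neg_sq]
  have h2 := even (π / 2 * Real.cosh x) (Real.sin y)
  have h3 := even (π / 2) (Real.sin y)
  have habs : |π / 2 * Real.sinh |x| * Real.cos y| = |π / 2 * Real.sinh x * Real.cos y| := by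
    rw [abs_mul, abs_mul, abs_mul, abs_mul, ← Real.abs_sinh, _root_.abs_abs]
  have h4 : Real.cosh (π / 2 * Real.sinh |x| * Real.cos y)
      = Real.cosh (π / 2 * Real.sinh x * Real.cos y) := by
    rw [← Real.cosh_abs, habs, Real.cosh_abs]
  rw [h4] at h
  have hL := abs_nonneg (Real.sin (π / 2 * Real.cosh x * |Real.sin y|))
  nlinarith [_root_.sq_abs (Real.sin (π / 2 * Real.cosh x * |Real.sin y|)), h2, h3,
    Real.cosh_pos (x := π / 2 * Real.sinh x * Real.cos y),
    _root_.abs_nonneg (Real.sin y)]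

theorem abs_one_add_exp_pi_sinh_ge (x y : ℝ) (hy : |y| < π / 2) :
    ‖1 + Complex.exp (π * Complex.sinh (x + y * Complex.I))‖
      ≥ (1 + Real.exp (π * Real.sinh x * Real.cos y)) * Real.cos (π / 2 * Real.sin y) := by
  set a := π * Real.sinh x * Real.cos y with ha
  set b := π * Real.cosh x * Real.sin y with hb
  have h1 : Complex.sinh (x + y * Complex.I)
      = Complex.sinh x * Complex.cos y + Complex.cosh x * Complex.sin y * Complex.I := by
    rw [Complex.sinh_add, Complex.cosh_mul_I, Complex.sinh_mul_I]; ring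
  have hw : (π : ℂ) * Complex.sinh (x + y * Complex.I) = (a : ℂ) + (b : ℂ) * Complex.I := by
    rw [h1, ← Complex.ofReal_sinh, ← Complex.ofReal_cos, ← Complex.ofReal_cosh,
      ← Complex.ofReal_sin]
    push_cast [ha, hb]
    ring
  rw [hw]
  have habs2 : ‖1 + Complex.exp ((a : ℂ) + (b : ℂ) * Complex.I)‖ ^ 2
      = 1 + 2 * Real.exp a * Real.cos b + Real.exp a ^ 2 := by
    rw [Complex.sq_norm, Complex.normSq_apply]
    simp only [Complex.add_re, Complex.add_im, Complex.one_re, Complex.one_im,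
      Complex.exp_re, Complex.exp_im, Complex.ofReal_re, Complex.ofReal_im,
      Complex.mul_re, Complex.mul_im, Complex.I_re, Complex.I_im]
    ring_nf
    nlinarith [Real.sin_sq_add_cos_sq b, Real.exp_pos a]
  have hkey := key_sq x y (le_of_lt hy)
  have hA : π / 2 * Real.sinh x * Real.cos y = a / 2 := by rw [ha]; ring
  have hcb : Real.cos b = 1 - 2 * Real.sin (π / 2 * Real.cosh x * Real.sin y) ^ 2 := by
    have h := Real.cos_two_mul' (π / 2 * Real.cosh x * Real.sin y)
    rw [show 2 * (π / 2 * Real.cosh x * Real.sin y) = b by rw [hb]; ring] at h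
    have hp := Real.sin_sq_add_cos_sq (π / 2 * Real.cosh x * Real.sin y)
    linarith
  have he1 : Real.exp (a / 2) * Real.exp (a / 2) = Real.exp a := by
    rw [← Real.exp_add]; norm_num
  have he2 : Real.exp (a / 2) * Real.exp (-(a / 2)) = 1 := by
    rw [← Real.exp_add]; simp
  have hcoshA : 2 * Real.exp (a / 2) * Real.cosh (a / 2) = 1 + Real.exp a := by
    rw [Real.cosh_eq]
    linear_combination he1 + he2
  have hsq2 : (1 + Real.exp a) ^ 2 = 4 * Real.exp a * Real.cosh (a / 2) ^ 2 := by
    linear_combination (-(2 * Real.exp (a / 2) * Real.cosh (a / 2) + 1 + Real.exp a)) * hcoshA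
      + 4 * Real.cosh (a / 2) ^ 2 * he1
  rw [hA] at hkey
  set θ := π / 2 * Real.sin y with hθ
  have hcosθ : 0 ≤ Real.cos θ := by
    apply Real.cos_nonneg_of_mem_Icc
    constructor
    · rw [hθ]; nlinarith [Real.neg_one_le_sin y, Real.pi_pos]
    · rw [hθ]; nlinarith [Real.sin_le_one y, Real.pi_pos]
  have hR0 : 0 ≤ (1 + Real.exp a) * Real.cos θ := by
    have := Real.exp_pos a; positivity
  have hL0 : 0 ≤ ‖1 + Complex.exp ((a : ℂ) + (b : ℂ) * Complex.I)‖ :=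
    norm_nonneg _
  have hpyth := Real.sin_sq_add_cos_sq θ
  have hmul := mul_le_mul_of_nonneg_left hkey
    (by positivity : (0 : ℝ) ≤ 4 * Real.exp a)
  have hsqle : ((1 + Real.exp a) * Real.cos θ) ^ 2
      ≤ ‖1 + Complex.exp ((a : ℂ) + (b : ℂ) * Complex.I)‖ ^ 2 := by
    rw [habs2]
    nlinarith [hmul, hcb, hsq2, hpyth, Real.exp_pos a,
      mul_le_mul_of_nonneg_right hsq2.le (sq_nonneg (Real.sin θ))]
  nlinarith [hsqle, hR0, hL0]
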